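/- arXiv:math/0411452 — 2 statements merged into one kernel-verified Lean document; each statement's English description precedes it below -/
import Mathlib

section
/- The symplectic graph Sp(2ν,q) is a strongly regular graph with parameters ((q^{2ν}-1)/(q-1), q^{2ν-1}, q^{2ν-2}(q-1), q^{2ν-2}(q-1)): it has (q^{2ν}-1)/(q-1) vertices, every vertex has degree q^{2ν-1}, any two distinct adjacent vertices have exactly q^{2ν-2}(q-1) common neighbors, and any two distinct non-adjacent vertices have exactly q^{2ν-2}(q-1) common neighbors. -/
open Matrix

/-- The standard nonsingular alternate matrix over `F` with `ν` diagonal blocks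
`[[0,1],[-1,0]]`. -/
def sK (F : Type) [Field F] (ν : ℕ) : Matrix (Fin (2 * ν)) (Fin (2 * ν)) F :=
  Matrix.of fun i j =>
    if i.val % 2 = 0 ∧ j.val = i.val + 1 then (1 : F)
    else if j.val % 2 = 0 ∧ i.val = j.val + 1 then (-1 : F) else 0

section Aux
open Function
variable {F : Type} [Field F] {ν : ℕ}

lemma vecMul_sK (α : Fin (2*ν) → F) (j : Fin (2*ν)) :
    (α ᵥ* sK F ν) j = if h : j.val % 2 = 0 then -α ⟨j.val+1, by omega⟩
      else α ⟨j.val-1, by have := j.2; omega⟩ := by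
  rw [vecMul, dotProduct]
  split_ifs with h
  · rw [Finset.sum_eq_single (⟨j.val+1, by have := j.2; omega⟩ : Fin (2*ν))]
    · simp only [sK, of_apply, Fin.val_mk]
      rw [if_neg (by omega), if_pos ⟨h, trivial⟩]
      ring
    · intro i _ hne
      simp only [sK, of_apply]
      rw [if_neg (by omega), if_neg (by rintro ⟨h1, h2⟩; exact hne (Fin.ext h2))]
      ring
    · simp
  · rw [Finset.sum_eq_single (⟨j.val-1, by have := j.2; omega⟩ : Fin (2*ν))]
    · simp only [sK, of_apply, Fin.val_mk]
      rw [if_pos ⟨by omega, by omega⟩]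
      ring
    · intro i _ hne
      simp only [sK, of_apply]
      rw [if_neg (by rintro ⟨h1, h2⟩; exact hne (Fin.ext (show i.val = j.val - 1 by omega))), if_neg (by omega)]
      ring
    · simp


lemma eq_zero_of_vecMul_sK {α : Fin (2*ν) → F} (h : α ᵥ* sK F ν = 0) : α = 0 := by
  funext i
  have hb := i.2
  show α i = 0
  by_cases he : i.val % 2 = 0
  · have hj : i.val + 1 < 2*ν := by omega
    have h2 := congrFun h ⟨i.val+1, hj⟩
    rw [vecMul_sK, dif_neg (show ¬((i.val+1) % 2 = 0) by omega)] at h2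
    have he2 : (⟨i.val + 1 - 1, by omega⟩ : Fin (2*ν)) = i :=
      Fin.ext (show i.val + 1 - 1 = i.val by omega)
    rwa [he2] at h2
  · have hj : i.val - 1 < 2*ν := by omega
    have h2 := congrFun h ⟨i.val-1, hj⟩
    rw [vecMul_sK, dif_pos (show (i.val-1) % 2 = 0 by omega)] at h2
    have he2 : (⟨i.val - 1 + 1, by omega⟩ : Fin (2*ν)) = i :=
      Fin.ext (show i.val - 1 + 1 = i.val by omega)
    rw [he2] at h2
    simpa [neg_eq_zero] using h2

lemma vecMul_sK_ne_zero {α : Fin (2*ν) → F} (hα : α ≠ 0) : α ᵥ* sK F ν ≠ 0 :=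
  fun h => hα (eq_zero_of_vecMul_sK h)

lemma sK_transpose : (sK F ν)ᵀ = -(sK F ν) := by
  ext i j
  simp only [transpose_apply, Matrix.neg_apply, neg_of, sK, of_apply, Pi.neg_apply]
  split_ifs <;> (try (exfalso; omega)) <;> ring

lemma sK_alt (α : Fin (2*ν) → F) : α ⬝ᵥ (sK F ν *ᵥ α) = 0 := by
  rw [dotProduct_mulVec, dotProduct]
  apply Finset.sum_ninvolution
    (fun j : Fin (2*ν) => if h : j.val % 2 = 0 then ⟨j.val+1, by have := j.2; omega⟩
      else ⟨j.val-1, by have := j.2; omega⟩)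
  · intro j
    by_cases h : j.val % 2 = 0
    · rw [dif_pos h, vecMul_sK, vecMul_sK, dif_pos h,
        dif_neg (show ¬((j.val+1) % 2 = 0) by omega)]
      have he2 : (⟨j.val + 1 - 1, by have := j.2; omega⟩ : Fin (2*ν)) = j :=
        Fin.ext (show j.val + 1 - 1 = j.val by omega)
      rw [he2]
      ring
    · rw [dif_neg h, vecMul_sK, vecMul_sK, dif_neg h,
        dif_pos (show (j.val-1) % 2 = 0 by have := j.2; omega)]
      have he2 : (⟨j.val - 1 + 1, by have := j.2; omega⟩ : Fin (2*ν)) = j :=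
        Fin.ext (show j.val - 1 + 1 = j.val by have := j.2; omega)
      rw [he2]
      ring
  · intro j _
    by_cases h : j.val % 2 = 0
    · rw [dif_pos h]
      intro hc
      have hv : j.val + 1 = j.val := congrArg Fin.val hc
      omega
    · rw [dif_neg h]
      intro hc
      have hv : j.val - 1 = j.val := congrArg Fin.val hc
      omega
  · intro j; exact Finset.mem_univ _
  · intro j
    have hb := j.2
    by_cases h : j.val % 2 = 0
    · rw [dif_pos h, dif_neg (show ¬((j.val+1) % 2 = 0) by omega)]
      exact Fin.ext (show j.val + 1 - 1 = j.val by omega)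
    · rw [dif_neg h, dif_pos (show (j.val-1) % 2 = 0 by omega)]
      exact Fin.ext (show j.val - 1 + 1 = j.val by omega)

lemma sK_antisymm (α β : Fin (2*ν) → F) :
    β ⬝ᵥ (sK F ν *ᵥ α) = -(α ⬝ᵥ (sK F ν *ᵥ β)) := by
  have h1 : β ᵥ* sK F ν = ((sK F ν)ᵀ) *ᵥ β := by
    rw [← vecMul_transpose, transpose_transpose]
  rw [dotProduct_mulVec, h1, sK_transpose, neg_mulVec, neg_dotProduct, dotProduct_comm,
    dotProduct_mulVec]

section LinCount
variable {F : Type} [Field F] {V W : Type} [AddCommGroup V] [Module F V]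
  [AddCommGroup W] [Module F W]

lemma fiber_card [Fintype V] (h : V →ₗ[F] W) (hs : Surjective h) (w : W) :
    Nat.card {v : V // h v = w} = Nat.card {v : V // h v = (0:W)} := by
  obtain ⟨v0, rfl⟩ := hs w
  exact Nat.card_congr
    ⟨fun p => ⟨p.1 - v0, by simp [map_sub, p.2]⟩,
     fun p => ⟨p.1 + v0, by simp [map_add, p.2]⟩,
     fun p => by ext; simp, fun p => by ext; simp⟩

lemma card_preimage [Fintype V] [Fintype W] (h : V →ₗ[F] W) (hs : Surjective h) (S : Set W) :
    Nat.card {v : V // h v ∈ S} = Nat.card S * Nat.card {v : V // h v = (0:W)} := by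
  classical
  rw [Nat.card_eq_fintype_card, Fintype.card_subtype]
  rw [Finset.card_eq_sum_card_fiberwise (f := fun v => h v) (t := S.toFinset)
    (fun v hv => by simpa using (Finset.mem_filter.mp hv).2)]
  have hterm : ∀ w ∈ S.toFinset,
      ((Finset.univ.filter fun v => h v ∈ S).filter fun v => h v = w).card
        = Nat.card {v : V // h v = (0:W)} := by
    intro w hw
    rw [← fiber_card h hs w, Nat.card_eq_fintype_card, Fintype.card_subtype]
    congr 1
    ext v
    simp only [Finset.mem_filter, Finset.mem_univ, true_and]
    constructor
    · rintro ⟨_, h2⟩; exact h2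
    · intro h2; exact ⟨by rw [h2]; simpa using hw, h2⟩
  rw [Finset.sum_congr rfl hterm, Finset.sum_const, smul_eq_mul]
  congr 1
  rw [Set.toFinset_card, Nat.card_eq_fintype_card]

lemma card_domain [Fintype V] [Fintype W] (h : V →ₗ[F] W) (hs : Surjective h) :
    Fintype.card V = Fintype.card W * Nat.card {v : V // h v = (0:W)} := by
  have := card_preimage h hs Set.univ
  simp only [Set.mem_univ] at this
  rw [Nat.card_eq_fintype_card] at this
  rwa [Fintype.card_congr (Equiv.subtypeUnivEquiv (fun _ => trivial)),
    Nat.card_congr (Equiv.Set.univ W), Nat.card_eq_fintype_card] at this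

end LinCount

section Dot
variable {F : Type} [Field F] {n : ℕ}

/-- dot product with fixed left vector, as a linear map. -/
def linDot (w : Fin n → F) : (Fin n → F) →ₗ[F] F where
  toFun v := w ⬝ᵥ v
  map_add' u v := dotProduct_add w u v
  map_smul' c v := by simp [dotProduct_smul, smul_eq_mul]

lemma eq_zero_of_forall_dot {w : Fin n → F} (h : ∀ v, w ⬝ᵥ v = 0) : w = 0 := by
  funext i
  have := h (Pi.single i 1)
  rwa [dotProduct_single, mul_one] at this

lemma exists_dot_ne {w : Fin n → F} (hw : w ≠ 0) : ∃ v, w ⬝ᵥ v ≠ 0 := by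
  by_contra hc
  push_neg at hc
  exact hw (eq_zero_of_forall_dot hc)

lemma linDot_surj {w : Fin n → F} (hw : w ≠ 0) : Surjective (linDot w) := by
  obtain ⟨v, hv⟩ := exists_dot_ne hw
  intro c
  refine ⟨(c / (w ⬝ᵥ v)) • v, ?_⟩
  show w ⬝ᵥ _ = c
  rw [dotProduct_smul, smul_eq_mul]
  field_simp

lemma key_ind (w1 w2 : Fin n → F) (H : ∀ c d : F, c • w1 + d • w2 = 0 → c = 0 ∧ d = 0) :
    ∃ u, w1 ⬝ᵥ u = 0 ∧ w2 ⬝ᵥ u ≠ 0 := by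
  have hw1 : w1 ≠ 0 := by
    intro h0
    have := (H 1 0 (by simp [h0])).1
    simp at this
  by_contra hc
  push_neg at hc
  obtain ⟨v0, hv0⟩ := exists_dot_ne hw1
  set a := w1 ⬝ᵥ v0 with ha
  set c := (w2 ⬝ᵥ v0) / a with hcdef
  have hall : ∀ v, w2 ⬝ᵥ v = c * (w1 ⬝ᵥ v) := by
    intro v
    have h1 : w1 ⬝ᵥ (v - ((w1 ⬝ᵥ v) / a) • v0) = 0 := by
      rw [dotProduct_sub, dotProduct_smul, smul_eq_mul]
      field_simp
      rw [← ha]; ring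
    have h2 := hc _ h1
    rw [dotProduct_sub, dotProduct_smul, smul_eq_mul, sub_eq_zero] at h2
    rw [h2, hcdef]
    field_simp
  have hzero : c • w1 + (-1 : F) • w2 = 0 := by
    apply eq_zero_of_forall_dot
    intro v
    rw [dotProduct_comm]
    rw [dotProduct_add, dotProduct_smul, dotProduct_smul, smul_eq_mul, smul_eq_mul,
      dotProduct_comm v w1, dotProduct_comm v w2, hall v]
    ring
  have := (H c (-1) hzero).2
  norm_num at this

lemma linPair_surj (w1 w2 : Fin n → F) (H : ∀ c d : F, c • w1 + d • w2 = 0 → c = 0 ∧ d = 0) :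
    Surjective ((linDot w1).prod (linDot w2)) := by
  obtain ⟨u, hu1, hu2⟩ := key_ind w1 w2 H
  obtain ⟨u', hu2', hu1'⟩ := key_ind w2 w1 (fun c d h => by
    have := H d c (by rw [← h]; ring)
    exact ⟨this.2, this.1⟩)
  rintro ⟨a, b⟩
  refine ⟨(a / (w1 ⬝ᵥ u')) • u' + (b / (w2 ⬝ᵥ u)) • u, ?_⟩
  have e1 : w1 ⬝ᵥ ((a / (w1 ⬝ᵥ u')) • u' + (b / (w2 ⬝ᵥ u)) • u) = a := by
    rw [dotProduct_add, dotProduct_smul, dotProduct_smul, smul_eq_mul, smul_eq_mul, hu1]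
    field_simp
    ring
  have e2 : w2 ⬝ᵥ ((a / (w1 ⬝ᵥ u')) • u' + (b / (w2 ⬝ᵥ u)) • u) = b := by
    rw [dotProduct_add, dotProduct_smul, dotProduct_smul, smul_eq_mul, smul_eq_mul, hu2']
    field_simp
    ring
  exact Prod.ext e1 e2

lemma linDot_apply (w v : Fin n → F) : linDot w v = w ⬝ᵥ v := rfl

lemma card_ne_zero [Fintype F] : Nat.card {c : F // c ≠ 0} = Fintype.card F - 1 := by
  rw [← Nat.card_congr unitsEquivNeZero, Nat.card_units, Nat.card_eq_fintype_card]

lemma count_one [Fintype F] (hn : 1 ≤ n) {w : Fin n → F} (hw : w ≠ 0) :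
    Nat.card {v : Fin n → F // w ⬝ᵥ v ≠ 0}
      = (Fintype.card F - 1) * Fintype.card F ^ (n-1) := by
  classical
  set q := Fintype.card F with hqdef
  have hq : q ≠ 0 := Fintype.card_ne_zero
  have hdom := card_domain (linDot w) (linDot_surj hw)
  have hcard : Fintype.card (Fin n → F) = q ^ n := by simp [hqdef]
  have hm : Nat.card {v : Fin n → F // linDot w v = 0} = q ^ (n-1) := by
    apply mul_left_cancel₀ hq
    rw [← hdom, hcard]
    rw [← pow_succ']
    congr 1
    omega
  have hpre := card_preimage (linDot w) (linDot_surj hw) {c : F | c ≠ 0}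
  rw [hm] at hpre
  have he : Nat.card {v : Fin n → F // linDot w v ∈ {c : F | c ≠ 0}}
      = Nat.card {v : Fin n → F // w ⬝ᵥ v ≠ 0} :=
    Nat.card_congr (Equiv.subtypeEquivRight (fun v => by simp [linDot_apply]))
  rw [he] at hpre
  rw [hpre]
  congr 1
  have : {c : F | c ≠ 0} = setOf (fun c : F => c ≠ 0) := rfl
  rw [← card_ne_zero (F := F)]
  rfl

lemma count_two [Fintype F] (hn : 2 ≤ n) {w1 w2 : Fin n → F}
    (H : ∀ c d : F, c • w1 + d • w2 = 0 → c = 0 ∧ d = 0) :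
    Nat.card {v : Fin n → F // w1 ⬝ᵥ v ≠ 0 ∧ w2 ⬝ᵥ v ≠ 0}
      = (Fintype.card F - 1) * ((Fintype.card F - 1) * Fintype.card F ^ (n-2)) := by
  classical
  set q := Fintype.card F with hqdef
  have hq2 : q ^ 2 ≠ 0 := pow_ne_zero _ Fintype.card_ne_zero
  set h := (linDot w1).prod (linDot w2) with hhdef
  have hs := linPair_surj w1 w2 H
  have hdom := card_domain h hs
  have hcard : Fintype.card (Fin n → F) = q ^ n := by simp [hqdef]
  have hFF : Fintype.card (F × F) = q ^ 2 := by simp [hqdef]; ring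
  rw [hcard, hFF] at hdom
  have hm : Nat.card {v : Fin n → F // h v = 0} = q ^ (n-2) := by
    apply mul_left_cancel₀ hq2
    rw [← hdom, ← pow_add]
    congr 1
    omega
  have hpre := card_preimage h hs {p : F × F | p.1 ≠ 0 ∧ p.2 ≠ 0}
  rw [hm] at hpre
  have he : Nat.card {v : Fin n → F // h v ∈ {p : F × F | p.1 ≠ 0 ∧ p.2 ≠ 0}}
      = Nat.card {v : Fin n → F // w1 ⬝ᵥ v ≠ 0 ∧ w2 ⬝ᵥ v ≠ 0} :=
    Nat.card_congr (Equiv.subtypeEquivRight (fun v => by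
      simp [hhdef, LinearMap.prod_apply, linDot_apply, Set.mem_setOf_eq, Pi.prod]))
  rw [he] at hpre
  rw [hpre]
  have hS : Nat.card {p : F × F | p.1 ≠ 0 ∧ p.2 ≠ 0} = (q - 1) * (q - 1) := by
    have e1 : {p : F × F // p.1 ≠ 0 ∧ p.2 ≠ 0} ≃ {a : F // a ≠ 0} × {b : F // b ≠ 0} :=
      Equiv.subtypeProdEquivProd (p := fun a : F => a ≠ 0) (q := fun b : F => b ≠ 0)
    have : Nat.card {p : F × F | p.1 ≠ 0 ∧ p.2 ≠ 0}
        = Nat.card ({a : F // a ≠ 0} × {b : F // b ≠ 0}) := Nat.card_congr e1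
    rw [this, Nat.card_prod, card_ne_zero]
  rw [hS]
  ring

end Dot

end Aux

section Aux2
open Function

lemma card_eq_of_fibers {A B : Type} [Finite A] [Finite B] (f : A → B) (m : ℕ)
    (hf : ∀ b, Nat.card {a : A // f a = b} = m) : Nat.card A = Nat.card B * m := by
  classical
  letI : Fintype A := Fintype.ofFinite A
  letI : Fintype B := Fintype.ofFinite B
  rw [Nat.card_eq_fintype_card, Nat.card_eq_fintype_card,
    Fintype.card_congr (Equiv.sigmaFiberEquiv f).symm, Fintype.card_sigma]
  have : ∀ b : B, Fintype.card {a : A // f a = b} = m := by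
    intro b
    rw [← Nat.card_eq_fintype_card]
    exact hf b
  rw [Finset.sum_congr rfl (fun b _ => this b), Finset.sum_const, smul_eq_mul,
    Finset.card_univ]

open Projectivization in
lemma proj_count {F V : Type} [Field F] [Fintype F] [AddCommGroup V] [Module F V] [Finite V]
    (P : V → Prop) (hsm : ∀ (a : Fˣ) (v : V), P ((a : F) • v) ↔ P v) :
    Nat.card {v : V // v ≠ 0 ∧ P v}
      = Nat.card {x : Projectivization F V // P x.rep} * (Fintype.card F - 1) := by
  classical
  set T := {v : V // v ≠ 0 ∧ P v}
  have hrepP : ∀ (v : V) (hv : v ≠ 0), P v → P (Projectivization.mk F v hv).rep := by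
    intro v hv hPv
    obtain ⟨a, ha⟩ := exists_smul_eq_mk_rep F v hv
    rw [← ha]
    exact (hsm a v).mpr hPv
  set φ : T → {x : Projectivization F V // P x.rep} :=
    fun v => ⟨Projectivization.mk F v.1 v.2.1, hrepP v.1 v.2.1 v.2.2⟩ with hφdef
  have hfib : ∀ x : {x : Projectivization F V // P x.rep},
      Nat.card {v : T // φ v = x} = Fintype.card F - 1 := by
    intro x
    have hx : P x.1.rep := x.2
    set g : Fˣ → {v : T // φ v = x} := fun a =>
      ⟨⟨(a : F) • x.1.rep, smul_ne_zero (Units.ne_zero a) x.1.rep_nonzero,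
          (hsm a _).mpr hx⟩, by
        apply Subtype.ext
        show Projectivization.mk F ((a : F) • x.1.rep) _ = x.1
        have h1 : Projectivization.mk F ((a : F) • x.1.rep)
            (smul_ne_zero (Units.ne_zero a) x.1.rep_nonzero)
            = Projectivization.mk F x.1.rep x.1.rep_nonzero :=
          (Projectivization.mk_eq_mk_iff F _ _ _ _).mpr ⟨a, rfl⟩
        rw [h1, Projectivization.mk_rep]⟩ with hgdef
    have hbij : Bijective g := by
      constructor
      · intro a b hab
        have h1 : (a : F) • x.1.rep = (b : F) • x.1.rep :=
          congrArg (fun z => (z.1.1 : V)) hab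
        have h2 : ((a : F) - b) • x.1.rep = 0 := by
          rw [sub_smul, h1, sub_self]
        rcases smul_eq_zero.mp h2 with h3 | h3
        · exact Units.ext (sub_eq_zero.mp h3)
        · exact absurd h3 x.1.rep_nonzero
      · rintro ⟨⟨v, hv0, hPv⟩, hφv⟩
        have hmk : Projectivization.mk F v hv0 = Projectivization.mk F x.1.rep x.1.rep_nonzero := by
          have := congrArg Subtype.val hφv
          simpa [Projectivization.mk_rep] using this
        obtain ⟨a, ha⟩ := (Projectivization.mk_eq_mk_iff F _ _ _ _).mp hmk
        exact ⟨a, Subtype.ext (Subtype.ext ha)⟩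
    rw [← Nat.card_congr (Equiv.ofBijective g hbij), Nat.card_units,
      Nat.card_eq_fintype_card]
  haveI : Finite (Projectivization F V) :=
    Finite.of_surjective (fun v : {v : V // v ≠ 0} => Projectivization.mk F v.1 v.2)
      (fun x => ⟨⟨x.rep, x.rep_nonzero⟩, x.mk_rep⟩)
  rw [card_eq_of_fibers φ (Fintype.card F - 1) hfib]


/-- The symplectic graph `Sp(2ν, q)`: vertices are the one-dimensional subspaces
of `F^(2ν)`, with `[α]` adjacent to `[β]` iff `α K βᵀ ≠ 0`. -/
def SpG (F : Type) [Field F] (ν : ℕ) :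
    SimpleGraph (Projectivization F (Fin (2 * ν) → F)) :=
  SimpleGraph.fromRel fun x y => x.rep ⬝ᵥ ((sK F ν) *ᵥ y.rep) ≠ 0

end Aux2

section Main
variable {F : Type} [Field F] {ν : ℕ}

lemma SpG_adj_iff (x y : Projectivization F (Fin (2 * ν) → F)) :
    (SpG F ν).Adj x y ↔ x.rep ⬝ᵥ (sK F ν *ᵥ y.rep) ≠ 0 := by
  rw [SpG, SimpleGraph.fromRel_adj]
  constructor
  · rintro ⟨hne, h | h⟩
    · exact h
    · rw [sK_antisymm] at h
      simpa using h
  · intro h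
    refine ⟨?_, Or.inl h⟩
    rintro rfl
    exact h (sK_alt _)

lemma indep_of_ne {x y : Projectivization F (Fin (2 * ν) → F)} (hxy : x ≠ y) :
    ∀ c d : F, c • (x.rep ᵥ* sK F ν) + d • (y.rep ᵥ* sK F ν) = 0 → c = 0 ∧ d = 0 := by
  intro c d h
  have h1 : (c • x.rep + d • y.rep) ᵥ* sK F ν = 0 := by
    rw [add_vecMul, smul_vecMul, smul_vecMul]
    exact h
  have h2 : c • x.rep + d • y.rep = 0 := eq_zero_of_vecMul_sK h1
  have hd : d = 0 := by
    by_contra hd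
    have hy : (-c/d) • x.rep = y.rep := by
      apply smul_right_injective (Fin (2*ν) → F) hd
      show d • ((-c/d) • x.rep) = d • y.rep
      rw [smul_smul]
      rw [show d * (-c/d) = -c by field_simp]
      linear_combination (norm := module) -h2
    have hmk : Projectivization.mk F y.rep y.rep_nonzero
        = Projectivization.mk F x.rep x.rep_nonzero :=
      (Projectivization.mk_eq_mk_iff' F _ _ _ _).mpr ⟨-c/d, hy⟩
    rw [Projectivization.mk_rep, Projectivization.mk_rep] at hmk
    exact hxy hmk.symm
  subst hd
  refine ⟨?_, rfl⟩
  rw [zero_smul, add_zero] at h2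
  rcases smul_eq_zero.mp h2 with h3 | h3
  · exact h3
  · exact absurd h3 x.rep_nonzero

theorem SpG_strongly_regular (q ν : ℕ) (F : Type) [Field F] [Fintype F]
    (hF : Fintype.card F = q) (hν : 1 ≤ ν) :
    Nat.card (Projectivization F (Fin (2 * ν) → F)) = (q ^ (2 * ν) - 1) / (q - 1) ∧
    (∀ x : Projectivization F (Fin (2 * ν) → F),
      ((SpG F ν).neighborSet x).ncard = q ^ (2 * ν - 1)) ∧
    (∀ x y : Projectivization F (Fin (2 * ν) → F), (SpG F ν).Adj x y →
      ((SpG F ν).neighborSet x ∩ (SpG F ν).neighborSet y).ncard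
        = q ^ (2 * ν - 2) * (q - 1)) ∧
    (∀ x y : Projectivization F (Fin (2 * ν) → F), x ≠ y → ¬ (SpG F ν).Adj x y →
      ((SpG F ν).neighborSet x ∩ (SpG F ν).neighborSet y).ncard
        = q ^ (2 * ν - 2) * (q - 1)) := by
  classical
  subst hF
  set q := Fintype.card F with hqdef
  have hq2 : 2 ≤ q := Fintype.one_lt_card
  have hq1 : 0 < q - 1 := by omega
  have hn : 2 ≤ 2 * ν := by omega
  -- common neighbor count, used for both the adjacent and non-adjacent cases
  have common : ∀ x y : Projectivization F (Fin (2 * ν) → F), x ≠ y →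
      ((SpG F ν).neighborSet x ∩ (SpG F ν).neighborSet y).ncard
        = q ^ (2 * ν - 2) * (q - 1) := by
    intro x y hxy
    set w1 := x.rep ᵥ* sK F ν with hw1
    set w2 := y.rep ᵥ* sK F ν with hw2
    have hset : (SpG F ν).neighborSet x ∩ (SpG F ν).neighborSet y
        = {z : Projectivization F (Fin (2 * ν) → F) | w1 ⬝ᵥ z.rep ≠ 0 ∧ w2 ⬝ᵥ z.rep ≠ 0} := by
      ext z
      simp only [Set.mem_inter_iff, SimpleGraph.mem_neighborSet, SpG_adj_iff,
        Set.mem_setOf_eq, hw1, hw2, ← dotProduct_mulVec]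
    rw [hset, ← Nat.card_coe_set_eq]
    have hP := proj_count (F := F) (V := Fin (2*ν) → F)
      (fun v => w1 ⬝ᵥ v ≠ 0 ∧ w2 ⬝ᵥ v ≠ 0)
      (fun a v => by
        show w1 ⬝ᵥ ((a:F) • v) ≠ 0 ∧ w2 ⬝ᵥ ((a:F) • v) ≠ 0 ↔ w1 ⬝ᵥ v ≠ 0 ∧ w2 ⬝ᵥ v ≠ 0
        rw [dotProduct_smul, dotProduct_smul, smul_eq_mul, smul_eq_mul,
          mul_ne_zero_iff, mul_ne_zero_iff]
        simp [Units.ne_zero a])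
    have he : Nat.card {v : Fin (2*ν) → F // v ≠ 0 ∧ (w1 ⬝ᵥ v ≠ 0 ∧ w2 ⬝ᵥ v ≠ 0)}
        = Nat.card {v : Fin (2*ν) → F // w1 ⬝ᵥ v ≠ 0 ∧ w2 ⬝ᵥ v ≠ 0} :=
      Nat.card_congr (Equiv.subtypeEquivRight (fun v =>
        ⟨And.right, fun h => ⟨by rintro rfl; exact h.1 (dotProduct_zero w1), h⟩⟩))
    rw [he, count_two hn (indep_of_ne hxy)] at hP
    rw [← hqdef] at hP
    beta_reduce at hP
    rw [show Nat.card ↥{z : Projectivization F (Fin (2 * ν) → F) |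
        w1 ⬝ᵥ z.rep ≠ 0 ∧ w2 ⬝ᵥ z.rep ≠ 0} = Nat.card {z : Projectivization F (Fin (2 * ν) → F) //
        w1 ⬝ᵥ z.rep ≠ 0 ∧ w2 ⬝ᵥ z.rep ≠ 0} from rfl]
    apply Nat.eq_of_mul_eq_mul_right hq1
    rw [← hP]
    ring
  refine ⟨?_, ?_, fun x y h => common x y h.ne, fun x y h _ => common x y h⟩
  · -- vertex count
    have hP := proj_count (F := F) (V := Fin (2*ν) → F) (fun _ => True) (fun _ _ => Iff.rfl)
    have he1 : Nat.card {v : Fin (2*ν) → F // v ≠ 0 ∧ True}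
        = Nat.card {v : Fin (2*ν) → F // v ≠ 0} :=
      Nat.card_congr (Equiv.subtypeEquivRight (by simp))
    have he2 : Nat.card {x : Projectivization F (Fin (2*ν) → F) // True}
        = Nat.card (Projectivization F (Fin (2*ν) → F)) :=
      Nat.card_congr (Equiv.subtypeUnivEquiv (fun _ => trivial))
    rw [he1, he2] at hP
    rw [← hqdef] at hP
    have hnz : Nat.card {v : Fin (2*ν) → F // v ≠ 0} = q ^ (2*ν) - 1 := by
      rw [Nat.card_eq_fintype_card, Fintype.card_subtype_compl (p := fun v : Fin (2*ν) → F => v = 0),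
        Fintype.card_subtype_eq (0 : Fin (2*ν) → F)]
      congr 1
      simp [hqdef]
    rw [hnz] at hP
    exact (Nat.div_eq_of_eq_mul_left hq1 hP).symm
  · -- degree
    intro x
    set w := x.rep ᵥ* sK F ν with hw
    have hwne : w ≠ 0 := vecMul_sK_ne_zero x.rep_nonzero
    have hset : (SpG F ν).neighborSet x
        = {z : Projectivization F (Fin (2 * ν) → F) | w ⬝ᵥ z.rep ≠ 0} := by
      ext z
      simp only [SimpleGraph.mem_neighborSet, SpG_adj_iff, Set.mem_setOf_eq, hw,
        ← dotProduct_mulVec]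
    rw [hset, ← Nat.card_coe_set_eq]
    have hP := proj_count (F := F) (V := Fin (2*ν) → F) (fun v => w ⬝ᵥ v ≠ 0)
      (fun a v => by
        show w ⬝ᵥ ((a:F) • v) ≠ 0 ↔ w ⬝ᵥ v ≠ 0
        rw [dotProduct_smul, smul_eq_mul, mul_ne_zero_iff]
        simp [Units.ne_zero a])
    have he : Nat.card {v : Fin (2*ν) → F // v ≠ 0 ∧ w ⬝ᵥ v ≠ 0}
        = Nat.card {v : Fin (2*ν) → F // w ⬝ᵥ v ≠ 0} :=
      Nat.card_congr (Equiv.subtypeEquivRight (fun v =>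
        ⟨And.right, fun h => ⟨by rintro rfl; exact h (dotProduct_zero w), h⟩⟩))
    rw [he, count_one (by omega) hwne] at hP
    rw [← hqdef] at hP
    beta_reduce at hP
    rw [show Nat.card ↥{z : Projectivization F (Fin (2 * ν) → F) | w ⬝ᵥ z.rep ≠ 0}
        = Nat.card {z : Projectivization F (Fin (2 * ν) → F) // w ⬝ᵥ z.rep ≠ 0} from rfl]
    apply Nat.eq_of_mul_eq_mul_right hq1
    rw [← hP]
    ring
end Main
end

section
/- The symplectic graph Sp(2ν,q) is vertex transitive: for any two vertices [α] and [β] there exists a graph automorphism of Sp(2ν,q) taking [α] to [β]. -/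
open Matrix

namespace SpGAux

variable {F : Type} [Field F] {ν : ℕ}

/-- The symplectic form. -/
def ω (u v : Fin (2 * ν) → F) : F := u ⬝ᵥ (sK F ν *ᵥ v)

/-- Upper-triangular part of `sK`. -/
def sA (F : Type) [Field F] (ν : ℕ) : Matrix (Fin (2 * ν)) (Fin (2 * ν)) F :=
  Matrix.of fun i j => if i.val % 2 = 0 ∧ j.val = i.val + 1 then (1 : F) else 0

lemma sK_eq : sK F ν = sA F ν - (sA F ν)ᵀ := by
  ext i j
  simp only [sK, sA, Matrix.of_apply, Matrix.sub_apply, Matrix.transpose_apply]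
  by_cases h1 : i.val % 2 = 0 ∧ j.val = i.val + 1
  · have h2 : ¬(j.val % 2 = 0 ∧ i.val = j.val + 1) := by omega
    rw [if_pos h1, if_pos h1, if_neg h2]; ring
  · rw [if_neg h1, if_neg h1]
    by_cases h2 : j.val % 2 = 0 ∧ i.val = j.val + 1
    · rw [if_pos h2, if_pos h2]; ring
    · rw [if_neg h2, if_neg h2]; ring

lemma ω_add_left (u v w : Fin (2 * ν) → F) : ω (u + v) w = ω u w + ω v w :=
  add_dotProduct _ _ _

lemma ω_smul_left (c : F) (u w : Fin (2 * ν) → F) : ω (c • u) w = c * ω u w :=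
  smul_dotProduct _ _ _

lemma ω_add_right (u v w : Fin (2 * ν) → F) : ω u (v + w) = ω u v + ω u w := by
  simp [ω, Matrix.mulVec_add, dotProduct_add]

lemma ω_smul_right (c : F) (u w : Fin (2 * ν) → F) : ω u (c • w) = c * ω u w := by
  simp [ω, Matrix.mulVec_smul, dotProduct_smul]

lemma ω_self (u : Fin (2 * ν) → F) : ω u u = 0 := by
  have h : u ⬝ᵥ ((sA F ν)ᵀ *ᵥ u) = u ⬝ᵥ (sA F ν *ᵥ u) := by
    rw [Matrix.mulVec_transpose, dotProduct_comm, ← Matrix.dotProduct_mulVec]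
  simp [ω, sK_eq, Matrix.sub_mulVec, dotProduct_sub, h]

lemma ω_skew (u v : Fin (2 * ν) → F) : ω v u = - ω u v := by
  have h := ω_self (u + v)
  rw [ω_add_left, ω_add_right, ω_add_right, ω_self, ω_self] at h
  linear_combination h

lemma ω_ne_zero_right {u v : Fin (2 * ν) → F} (h : ω u v ≠ 0) : v ≠ 0 := by
  rintro rfl
  simp [ω, Matrix.mulVec_zero] at h

lemma ω_ne_zero_left {u v : Fin (2 * ν) → F} (h : ω u v ≠ 0) : u ≠ 0 := by
  rintro rfl
  simp [ω] at h

/-- For nonzero `u` the linear functional `ω u ·` is nonzero. -/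
lemma exists_ω_ne {u : Fin (2 * ν) → F} (hu : u ≠ 0) : ∃ z, ω u z ≠ 0 := by
  obtain ⟨i, hi⟩ := Function.ne_iff.mp hu
  simp only [Pi.zero_apply] at hi
  rcases Nat.even_or_odd i.val with he | ho
  · -- i even, take z = e_{i+1}
    have he2 := Nat.even_iff.mp he
    have hlt : i.val + 1 < 2 * ν := by
      have := i.isLt; omega
    refine ⟨Pi.single ⟨i.val + 1, hlt⟩ 1, ?_⟩
    have : ω u (Pi.single (⟨i.val + 1, hlt⟩ : Fin (2 * ν)) 1) = u i := by
      rw [ω, Matrix.mulVec_single]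
      rw [show MulOpposite.op (1 : F) • (sK F ν).col ⟨i.val + 1, hlt⟩ =
        fun i' => sK F ν i' ⟨i.val + 1, hlt⟩ by funext i'; simp [Matrix.col_apply]]
      unfold dotProduct
      rw [Finset.sum_eq_single i]
      · simp only [sK, Matrix.of_apply, Fin.val_mk]
        rw [if_pos ⟨he2, trivial⟩]; ring
      · intro b _ hb
        have hb' : b.val ≠ i.val := fun h => hb (Fin.ext h)
        simp only [sK, Matrix.of_apply, Fin.val_mk]
        rw [if_neg (by omega), if_neg (by omega)]; ring
      · simp
    rw [this]; exact hi
  · -- i odd, take z = e_{i-1}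
    have h1 : 1 ≤ i.val := ho.pos
    have hlt : i.val - 1 < 2 * ν := by have := i.isLt; omega
    refine ⟨Pi.single ⟨i.val - 1, hlt⟩ 1, ?_⟩
    have : ω u (Pi.single (⟨i.val - 1, hlt⟩ : Fin (2 * ν)) 1) = - u i := by
      rw [ω, Matrix.mulVec_single]
      rw [show MulOpposite.op (1 : F) • (sK F ν).col ⟨i.val - 1, hlt⟩ =
        fun i' => sK F ν i' ⟨i.val - 1, hlt⟩ by funext i'; simp [Matrix.col_apply]]
      unfold dotProduct
      rw [Finset.sum_eq_single i]
      · have hmod : (i.val - 1) % 2 = 0 := by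
          have := Nat.odd_iff.mp ho; omega
        have : i.val = (i.val - 1) + 1 := by omega
        simp only [sK, Matrix.of_apply, Fin.val_mk]
        rw [if_neg, if_pos ⟨hmod, this⟩]; ring
        rintro ⟨hiev, -⟩
        have := Nat.odd_iff.mp ho; omega
      · intro b _ hb
        have hb' : b.val ≠ i.val := fun h => hb (Fin.ext h)
        have hodd := Nat.odd_iff.mp ho
        simp only [sK, Matrix.of_apply, Fin.val_mk]
        rw [if_neg (by omega), if_neg (by omega)]; ring
      · simp
    rw [this]
    simpa using hi

lemma ω_sub_right (u v w : Fin (2 * ν) → F) : ω u (v - w) = ω u v - ω u w := by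
  have h : v - w = v + (-1 : F) • w := by module
  rw [h, ω_add_right, ω_smul_right]; ring

lemma exists_common {u v : Fin (2 * ν) → F} (hu : u ≠ 0) (hv : v ≠ 0) :
    ∃ z, ω u z ≠ 0 ∧ ω v z ≠ 0 := by
  obtain ⟨a, ha⟩ := exists_ω_ne hu
  obtain ⟨b, hb⟩ := exists_ω_ne hv
  by_cases h1 : ω v a ≠ 0
  · exact ⟨a, ha, h1⟩
  by_cases h2 : ω u b ≠ 0
  · exact ⟨b, h2, hb⟩
  push_neg at h1 h2
  refine ⟨a + b, ?_, ?_⟩ <;> rw [ω_add_right] <;> simp [h1, h2, ha, hb]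

/-- Transvection as a linear map. -/
def tvL (c : F) (w : Fin (2 * ν) → F) :
    (Fin (2 * ν) → F) →ₗ[F] (Fin (2 * ν) → F) where
  toFun x := x + (c * ω x w) • w
  map_add' x y := by
    show (x + y) + (c * ω (x + y) w) • w = (x + (c * ω x w) • w) + (y + (c * ω y w) • w)
    rw [ω_add_left]; module
  map_smul' a x := by
    show (a • x) + (c * ω (a • x) w) • w = a • (x + (c * ω x w) • w)
    rw [ω_smul_left]; module

lemma tvL_comp (c : F) (w : Fin (2 * ν) → F) :
    (tvL c w).comp (tvL (-c) w) = LinearMap.id := by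
  apply LinearMap.ext; intro x
  rw [LinearMap.comp_apply, LinearMap.id_apply]
  show (x + (-c * ω x w) • w) + (c * ω (x + (-c * ω x w) • w) w) • w = x
  rw [ω_add_left, ω_smul_left, ω_self]
  module

/-- Transvection as a linear equivalence. -/
def tv (c : F) (w : Fin (2 * ν) → F) :
    (Fin (2 * ν) → F) ≃ₗ[F] (Fin (2 * ν) → F) :=
  LinearEquiv.ofLinear (tvL c w) (tvL (-c) w) (tvL_comp c w)
    (by simpa using tvL_comp (-c) w)

lemma tv_apply (c : F) (w x : Fin (2 * ν) → F) : tv c w x = x + (c * ω x w) • w := rfl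

lemma tv_ω (c : F) (w : Fin (2 * ν) → F) :
    ∀ x y, ω ((tv c w) x) ((tv c w) y) = ω x y := by
  intro x y
  simp only [tv_apply, ω_add_left, ω_add_right, ω_smul_left, ω_smul_right, ω_self,
    ω_skew y w]
  ring

lemma tv_sends {u v : Fin (2 * ν) → F} (h : ω u v ≠ 0) :
    tv (ω u v)⁻¹ (v - u) u = v := by
  rw [tv_apply, ω_sub_right, ω_self, sub_zero, inv_mul_cancel₀ h, one_smul]
  module

open Projectivization in
/-- The projective map induced by a linear equivalence. -/
noncomputable def pmap (T : (Fin (2 * ν) → F) ≃ₗ[F] (Fin (2 * ν) → F)) :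
    Projectivization F (Fin (2 * ν) → F) ≃ Projectivization F (Fin (2 * ν) → F) where
  toFun := Projectivization.map T.toLinearMap T.injective
  invFun := Projectivization.map T.symm.toLinearMap T.symm.injective
  left_inv := by
    intro p
    induction p using Projectivization.ind with
    | h v hv =>
      rw [Projectivization.map_mk, Projectivization.map_mk]
      apply (Projectivization.mk_eq_mk_iff F _ _ _ hv).2
      exact ⟨1, by simp⟩
  right_inv := by
    intro p
    induction p using Projectivization.ind with
    | h v hv =>
      rw [Projectivization.map_mk, Projectivization.map_mk]
      apply (Projectivization.mk_eq_mk_iff F _ _ _ hv).2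
      exact ⟨1, by simp⟩

lemma pmap_mk (T : (Fin (2 * ν) → F) ≃ₗ[F] (Fin (2 * ν) → F))
    {u : Fin (2 * ν) → F} (hu : u ≠ 0) :
    pmap T (Projectivization.mk F u hu) =
      Projectivization.mk F (T u) (T.map_ne_zero_iff.mpr hu) :=
  Projectivization.map_mk T.toLinearMap T.injective u hu

lemma adj_iff (x y : Projectivization F (Fin (2 * ν) → F)) :
    (SpG F ν).Adj x y ↔ x ≠ y ∧ ω x.rep y.rep ≠ 0 := by
  have hxy : (y.rep ⬝ᵥ (sK F ν *ᵥ x.rep) ≠ 0) ↔ ω x.rep y.rep ≠ 0 := by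
    show ω y.rep x.rep ≠ 0 ↔ _
    rw [ω_skew x.rep y.rep]
    simp
  rw [SpG, SimpleGraph.fromRel_adj]
  constructor
  · rintro ⟨hne, h | h⟩
    · exact ⟨hne, h⟩
    · exact ⟨hne, hxy.1 h⟩
  · rintro ⟨hne, h⟩
    exact ⟨hne, Or.inl h⟩

lemma ω_rep_iff {u v : Fin (2 * ν) → F} (hu : u ≠ 0) (hv : v ≠ 0) :
    ω (Projectivization.mk F u hu).rep (Projectivization.mk F v hv).rep ≠ 0 ↔ ω u v ≠ 0 := by
  obtain ⟨a, ha⟩ := Projectivization.exists_smul_eq_mk_rep F u hu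
  obtain ⟨b, hb⟩ := Projectivization.exists_smul_eq_mk_rep F v hv
  rw [← ha, ← hb, Units.smul_def, Units.smul_def, ω_smul_left, ω_smul_right]
  simp [mul_eq_zero, a.ne_zero, b.ne_zero]

/-- A linear equivalence preserving the form induces a graph automorphism. -/
noncomputable def gIso (T : (Fin (2 * ν) → F) ≃ₗ[F] (Fin (2 * ν) → F))
    (hT : ∀ u v, ω (T u) (T v) = ω u v) : SpG F ν ≃g SpG F ν where
  toEquiv := pmap T
  map_rel_iff' := by
    intro x y
    induction x using Projectivization.ind with
    | h u hu =>
    induction y using Projectivization.ind with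
    | h v hv =>
      have hTu : T u ≠ 0 := T.map_ne_zero_iff.mpr hu
      have hTv : T v ≠ 0 := T.map_ne_zero_iff.mpr hv
      show (SpG F ν).Adj (pmap T _) (pmap T _) ↔ _
      rw [pmap_mk T hu, pmap_mk T hv, adj_iff, adj_iff, ω_rep_iff hTu hTv,
        ω_rep_iff hu hv, hT u v]
      have hne : Projectivization.mk F (T u) hTu ≠ Projectivization.mk F (T v) hTv ↔
          Projectivization.mk F u hu ≠ Projectivization.mk F v hv := by
        apply not_congr
        rw [← pmap_mk T hu, ← pmap_mk T hv]
        exact Equiv.apply_eq_iff_eq _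
      rw [hne]

lemma gIso_mk (T : (Fin (2 * ν) → F) ≃ₗ[F] (Fin (2 * ν) → F))
    (hT : ∀ u v, ω (T u) (T v) = ω u v) {u : Fin (2 * ν) → F} (hu : u ≠ 0) :
    gIso T hT (Projectivization.mk F u hu) =
      Projectivization.mk F (T u) (T.map_ne_zero_iff.mpr hu) :=
  pmap_mk T hu

lemma mk_eq_of_eq {u v : Fin (2 * ν) → F} (hu : u ≠ 0) (hv : v ≠ 0) (h : u = v) :
    Projectivization.mk F u hu = Projectivization.mk F v hv := by subst h; rfl

end SpGAux

open SpGAux in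
theorem SpG_vertex_transitive (q ν : ℕ) (F : Type) [Field F] [Fintype F]
    (hF : Fintype.card F = q) (hν : 1 ≤ ν)
    (x y : Projectivization F (Fin (2 * ν) → F)) :
    ∃ g : SpG F ν ≃g SpG F ν, g x = y := by
  induction x using Projectivization.ind with
  | h u hu =>
  induction y using Projectivization.ind with
  | h v hv =>
    by_cases h : ω u v ≠ 0
    · refine ⟨gIso (tv (ω u v)⁻¹ (v - u)) (tv_ω _ _), ?_⟩
      rw [gIso_mk]
      exact mk_eq_of_eq _ hv (tv_sends h)
    · push_neg at h
      obtain ⟨z, hz1, hz2⟩ := exists_common hu hv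
      have hz : z ≠ 0 := ω_ne_zero_right hz1
      have hzv : ω z v ≠ 0 := by
        rw [ω_skew v z]
        simpa using hz2
      refine ⟨(gIso (tv (ω u z)⁻¹ (z - u)) (tv_ω _ _)).trans
        (gIso (tv (ω z v)⁻¹ (v - z)) (tv_ω _ _)), ?_⟩
      show gIso (tv (ω z v)⁻¹ (v - z)) (tv_ω _ _)
        (gIso (tv (ω u z)⁻¹ (z - u)) (tv_ω _ _) (Projectivization.mk F u hu)) =
        Projectivization.mk F v hv
      rw [gIso_mk]
      rw [mk_eq_of_eq _ hz (tv_sends hz1), gIso_mk]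
      exact mk_eq_of_eq _ hv (tv_sends hzv)
end
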